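/- Let H be a complex Hilbert space, let F be a bounded linear operator on H, and let r ∈ ℝ be such that Re ⟪φ, F φ⟫ ≥ r ‖φ‖² for every φ ∈ H. Then for every t ≥ 0 one has ‖exp(−t·F)‖ ≤ e^{−t r}. -/

import Mathlib

open NormedSpace

local notation "⟪" x ", " y "⟫" => @inner ℂ _ _ x y

/-- Gronwall-type bound: if `Re ⟪φ, Fφ⟫ ≥ r‖φ‖²` for all `φ`, then
`‖exp(−tF)‖ ≤ e^{−tr}` for all `t ≥ 0`. -/
theorem stmt_4 {H : Type*} [NormedAddCommGroup H] [InnerProductSpace ℂ H] [CompleteSpace H]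
    (F : H →L[ℂ] H) (r : ℝ)
    (hF : ∀ φ : H, r * ‖φ‖ ^ 2 ≤ ((inner ℂ φ (F φ) : ℂ)).re)
    (t : ℝ) (ht : 0 ≤ t) :
    ‖NormedSpace.exp ((-(t : ℂ)) • F)‖ ≤ Real.exp (-(t * r)) := by
  apply ContinuousLinearMap.opNorm_le_bound _ (Real.exp_nonneg _)
  intro φ
  set A : H →L[ℂ] H := -F with hA
  set y : ℝ → H := fun s => exp ((s:ℂ) • A) φ with hy
  have hyderiv : ∀ s : ℝ, HasDerivAt y (A (y s)) s := by
    intro s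
    have h1 : HasDerivAt (fun u : ℂ => exp (u • A)) (A * exp ((s:ℂ) • A)) (s:ℂ) :=
      hasDerivAt_exp_smul_const' A (s:ℂ)
    have h2 : HasDerivAt (fun u : ℝ => exp ((u:ℂ) • A)) (A * exp ((s:ℂ) • A)) s := by
      simpa [Function.comp_def] using (h1.hasFDerivAt.restrictScalars ℝ).comp_hasDerivAt s
        Complex.ofRealCLM.hasDerivAt
    simpa [Function.comp_def, hy] using
      (((ContinuousLinearMap.apply ℂ H φ).restrictScalars ℝ).hasFDerivAt).comp_hasDerivAt s h2
  set g : ℝ → ℝ := fun s => Real.exp (2 * r * s) * ‖y s‖ ^ 2 with hg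
  have hgderiv : ∀ s : ℝ, HasDerivAt g
      (2 * r * Real.exp (2 * r * s) * ‖y s‖ ^ 2
        + Real.exp (2 * r * s) * (⟪y s, A (y s)⟫ + ⟪A (y s), y s⟫).re) s := by
    intro s
    have hlin : HasDerivAt (fun s : ℝ => 2 * r * s) (2 * r) s := by
      simpa using (hasDerivAt_id s).const_mul (2 * r)
    have hexp := hlin.exp
    have hinner : HasDerivAt (fun s => (⟪y s, y s⟫ : ℂ))
        (⟪y s, A (y s)⟫ + ⟪A (y s), y s⟫) s := (hyderiv s).inner ℂ (hyderiv s)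
    have hre : HasDerivAt (fun s => ((⟪y s, y s⟫ : ℂ)).re)
        ((⟪y s, A (y s)⟫ + ⟪A (y s), y s⟫).re) s := by
      simpa [Function.comp_def] using (Complex.reCLM.hasFDerivAt).comp_hasDerivAt s hinner
    have hnorm : HasDerivAt (fun s => ‖y s‖ ^ 2)
        ((⟪y s, A (y s)⟫ + ⟪A (y s), y s⟫).re) s := by
      convert hre using 2 with s
      rw [← inner_self_eq_norm_sq (𝕜 := ℂ)]
      rfl
    have := hexp.mul hnorm
    rw [hg]
    exact this.congr_deriv (by ring)
  have hg_anti : g t ≤ g 0 := by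
    rcases eq_or_lt_of_le ht with h | h
    · rw [← h]
    have : AntitoneOn g (Set.Icc 0 t) := by
      apply antitoneOn_of_deriv_nonpos (convex_Icc 0 t)
      · exact fun s _ => ((hgderiv s).continuousAt).continuousWithinAt
      · exact fun s _ => (hgderiv s).differentiableAt.differentiableWithinAt
      · intro s _
        rw [(hgderiv s).deriv]
        have key : (⟪y s, A (y s)⟫ + ⟪A (y s), y s⟫).re ≤ -(2 * r) * ‖y s‖ ^ 2 := by
          have h1 : (⟪A (y s), y s⟫ : ℂ).re = (⟪y s, A (y s)⟫ : ℂ).re := by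
            simpa using inner_re_symm (𝕜 := ℂ) (A (y s)) (y s)
          have h2 : (⟪y s, A (y s)⟫ : ℂ).re = -((⟪y s, F (y s)⟫ : ℂ)).re := by
            simp [hA, inner_neg_right]
          have := hF (y s)
          simp only [Complex.add_re, h1, h2]
          linarith
        have hexp_pos : (0:ℝ) < Real.exp (2 * r * s) := Real.exp_pos _
        nlinarith [sq_nonneg (‖y s‖)]
    exact this (Set.left_mem_Icc.2 ht) (Set.right_mem_Icc.2 ht) ht
  have hy0 : y 0 = φ := by simp [hy, exp_zero]
  have hyt : y t = exp ((-(t : ℂ)) • F) φ := by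
    simp [hy, hA]
  have hfinal : Real.exp (2 * r * t) * ‖y t‖ ^ 2 ≤ ‖φ‖ ^ 2 := by
    simpa [hg, hy0] using hg_anti
  rw [← hyt]
  have h1 : ‖y t‖ ^ 2 ≤ (Real.exp (-(t * r)) * ‖φ‖) ^ 2 := by
    have he : Real.exp (-(t * r)) ^ 2 = (Real.exp (2 * r * t))⁻¹ := by
      rw [← Real.exp_nat_mul, ← Real.exp_neg]
      ring_nf
    rw [mul_pow, he]
    rw [le_inv_mul_iff₀ (Real.exp_pos (2 * r * t))] at *
    linarith [hfinal]
  calc ‖y t‖ = Real.sqrt (‖y t‖ ^ 2) := by rw [Real.sqrt_sq (norm_nonneg _)]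
    _ ≤ Real.sqrt ((Real.exp (-(t * r)) * ‖φ‖) ^ 2) := Real.sqrt_le_sqrt h1
    _ = Real.exp (-(t * r)) * ‖φ‖ := Real.sqrt_sq (by positivity)
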